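/- The formal power series identity ∑_{m=0}^∞ ∑_{k=0}^m f(m,k) x^m y^k = (1-x)^{-y} = ∑_{m=0}^∞ (∏_{j=0}^{m-1}(y+j)/m!) x^m holds, where f(m,k) = ∑_{λ ∈ P(m,k)} ∏_{n=1}^m 1/(n^{b_n(λ)} b_n(λ)!) and f(0,0) = 1. Equivalently, ∏_{n=1}^∞ exp(x^n y / n) = (1-x)^{-y} as formal power series in x with coefficients polynomials in y. -/

import Mathlib

open Finset

noncomputable def mW (s : Multiset ℕ) : ℚ :=
  ∏ n ∈ s.toFinset, 1 / ((n : ℚ) ^ (s.count n) * (Nat.factorial (s.count n)))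

lemma mW_eq_prod {s : Multiset ℕ} {T : Finset ℕ} (hT : s.toFinset ⊆ T) :
    mW s = ∏ n ∈ T, 1 / ((n : ℚ) ^ (s.count n) * (Nat.factorial (s.count n))) := by
  unfold mW
  refine Finset.prod_subset hT fun x _ hx => ?_
  rw [Multiset.count_eq_zero_of_notMem (by simpa using hx)]
  simp

lemma mW_erase {s : Multiset ℕ} {n : ℕ} (hn : n ∈ s) (hpos : 0 < n) :
    mW (s.erase n) = (n : ℚ) * (s.count n) * mW s := by
  have hsub : (s.erase n).toFinset ⊆ s.toFinset := by
    intro x hx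
    simpa using Multiset.mem_of_mem_erase (by simpa using hx)
  have hnT : n ∈ s.toFinset := by simpa using hn
  rw [mW_eq_prod hsub, mW]
  rw [← Finset.mul_prod_erase _ _ hnT, ← Finset.mul_prod_erase _ _ hnT]
  have hrest : ∀ x ∈ s.toFinset.erase n,
      1 / ((x : ℚ) ^ ((s.erase n).count x) * (Nat.factorial ((s.erase n).count x)))
        = 1 / ((x : ℚ) ^ (s.count x) * (Nat.factorial (s.count x))) := by
    intro x hx
    rw [Multiset.count_erase_of_ne (Finset.ne_of_mem_erase hx)]
  rw [Finset.prod_congr rfl hrest, ← mul_assoc, mul_comm ((n:ℚ)) ((s.count n : ℚ)),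
    mul_assoc, ← mul_assoc]
  congr 1
  obtain ⟨d, hd⟩ : ∃ d, s.count n = d + 1 :=
    ⟨s.count n - 1, (Nat.succ_pred_eq_of_pos (Multiset.count_pos.2 hn)).symm⟩
  rw [Multiset.count_erase_self, hd]
  simp only [Nat.add_sub_cancel, pow_succ, Nat.factorial_succ]
  have hn0 : (n : ℚ) ≠ 0 := Nat.cast_ne_zero.2 hpos.ne'
  have hfac : (Nat.factorial d : ℚ) ≠ 0 := Nat.cast_ne_zero.2 (Nat.factorial_ne_zero d)
  have hpow : (n : ℚ) ^ d ≠ 0 := pow_ne_zero _ hn0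
  field_simp
  push_cast
  ring


/-- `partWeight m k` is `∑_{λ ∈ P(m,k)} ∏_{n=1}^m 1/(n^{b_n(λ)} b_n(λ)!)`, where `P(m,k)`
is the set of partitions of `m` into exactly `k` parts and `b_n(λ)` is the multiplicity of
`n` in `λ`; in particular `partWeight 0 0 = 1`. -/
noncomputable def partWeight (m k : ℕ) : ℚ :=
  ∑ lam ∈ Finset.univ.filter (fun lam : Nat.Partition m => lam.parts.card = k),
    ∏ n ∈ Finset.Icc 1 m,
      1 / ((n : ℚ) ^ (lam.parts.count n) * (Nat.factorial (lam.parts.count n)))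



lemma parts_toFinset_subset {m : ℕ} (lam : Nat.Partition m) :
    lam.parts.toFinset ⊆ Finset.Icc 1 m := by
  intro x hx
  have hx' : x ∈ lam.parts := by simpa using hx
  have h1 : 1 ≤ x := lam.parts_pos hx'
  have h2 : x ≤ m := lam.parts_sum ▸ Multiset.le_sum_of_mem hx'
  simp [h1, h2]

lemma partWeight_eq (m k : ℕ) :
    partWeight m k = ∑ lam ∈ Finset.univ.filter
      (fun lam : Nat.Partition m => lam.parts.card = k), mW lam.parts := by
  refine Finset.sum_congr rfl fun lam _ => ?_
  exact (mW_eq_prod (parts_toFinset_subset lam)).symm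

lemma card_le_sum {m : ℕ} (lam : Nat.Partition m) : Multiset.card lam.parts ≤ m := by
  have := Multiset.card_nsmul_le_sum (s := lam.parts) (a := 1) fun x hx => lam.parts_pos hx
  simpa [lam.parts_sum] using this

lemma partWeight_eq_zero_of_lt {m k : ℕ} (h : m < k) : partWeight m k = 0 := by
  rw [partWeight_eq]
  apply Finset.sum_eq_zero
  intro lam hlam
  exfalso
  rw [Finset.mem_filter] at hlam
  exact absurd (hlam.2 ▸ card_le_sum lam) (by omega)

lemma partWeight_zero_right {m : ℕ} (hm : 1 ≤ m) : partWeight m 0 = 0 := by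
  rw [partWeight_eq]
  apply Finset.sum_eq_zero
  intro lam hlam
  exfalso
  rw [Finset.mem_filter, Multiset.card_eq_zero] at hlam
  have := lam.parts_sum
  rw [hlam.2] at this
  simp at this
  omega

lemma mul_mW_eq_sum_erase {s : Multiset ℕ} (hpos : ∀ x ∈ s, 0 < x) :
    ((s.sum : ℚ)) * mW s = ∑ n ∈ s.toFinset, mW (s.erase n) := by
  have h1 : ∀ n ∈ s.toFinset, mW (s.erase n) = ((n : ℚ) * (s.count n)) * mW s := by
    intro n hn
    have hn' : n ∈ s := by simpa using hn
    exact mW_erase hn' (hpos n hn')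
  rw [Finset.sum_congr rfl h1, ← Finset.sum_mul]
  congr 1
  have := Finset.sum_multiset_count s
  have : ((s.sum : ℚ)) = ((∑ a ∈ s.toFinset, s.count a • a : ℕ) : ℚ) := by rw [← this]
  rw [this]
  push_cast [smul_eq_mul]
  exact Finset.sum_congr rfl fun a _ => mul_comm _ _


/-- Remove a part from a partition. -/
def pwFwd {m : ℕ} (lam : Nat.Partition m) (n : ℕ) (hn : n ∈ lam.parts) :
    Nat.Partition (m - n) where
  parts := lam.parts.erase n
  parts_pos hx := lam.parts_pos (Multiset.mem_of_mem_erase hx)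
  parts_sum := by
    have h0 := lam.parts_sum
    have h : n + (lam.parts.erase n).sum = lam.parts.sum := by
      rw [← Multiset.sum_cons, Multiset.cons_erase hn]
    omega

/-- Add a part to a partition. -/
def pwBwd {m i : ℕ} (hi : 1 ≤ i) (him : i ≤ m) (mu : Nat.Partition (m - i)) :
    Nat.Partition m where
  parts := i ::ₘ mu.parts
  parts_pos hx := by
    rcases Multiset.mem_cons.1 hx with h | h
    · omega
    · exact mu.parts_pos h
  parts_sum := by rw [Multiset.sum_cons, mu.parts_sum]; omega

lemma partWeight_rec {m k : ℕ} (hk : 1 ≤ k) :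
    (m : ℚ) * partWeight m k = ∑ i ∈ Finset.Icc 1 m, partWeight (m - i) (k - 1) := by
  simp only [partWeight_eq]
  rw [Finset.mul_sum]
  have hstep : ∀ lam ∈ Finset.univ.filter
      (fun lam : Nat.Partition m => lam.parts.card = k),
      (m : ℚ) * mW lam.parts = ∑ n ∈ lam.parts.toFinset, mW (lam.parts.erase n) := by
    intro lam _
    have h := mul_mW_eq_sum_erase (s := lam.parts) (fun x hx => lam.parts_pos hx)
    rw [lam.parts_sum] at h
    exact h
  rw [Finset.sum_congr rfl hstep]
  rw [Finset.sum_sigma', Finset.sum_sigma']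
  refine Finset.sum_bij'
    (i := fun p hp => ⟨p.2, pwFwd p.1 p.2
      (Multiset.mem_toFinset.1 (Finset.mem_sigma.1 hp).2)⟩)
    (j := fun q hq => ⟨pwBwd
      (Finset.mem_Icc.1 (Finset.mem_sigma.1 hq).1).1
      (Finset.mem_Icc.1 (Finset.mem_sigma.1 hq).1).2 q.2, q.1⟩)
    ?_ ?_ ?_ ?_ ?_
  · rintro ⟨lam, n⟩ ha
    obtain ⟨h1, h2⟩ := Finset.mem_sigma.1 ha
    have hn : n ∈ lam.parts := Multiset.mem_toFinset.1 h2
    have hcard : Multiset.card lam.parts = k := (Finset.mem_filter.1 h1).2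
    refine Finset.mem_sigma.2 ⟨Finset.mem_Icc.2 ⟨lam.parts_pos hn,
      by show n ≤ m; rw [← lam.parts_sum]; exact Multiset.le_sum_of_mem hn⟩, ?_⟩
    refine Finset.mem_filter.2 ⟨Finset.mem_univ _, ?_⟩
    show Multiset.card (lam.parts.erase n) = k - 1
    rw [Multiset.card_erase_of_mem hn, hcard]
    rfl
  · rintro ⟨i, mu⟩ ha
    obtain ⟨h1, h2⟩ := Finset.mem_sigma.1 ha
    have hcard : Multiset.card mu.parts = k - 1 := (Finset.mem_filter.1 h2).2
    refine Finset.mem_sigma.2 ⟨Finset.mem_filter.2 ⟨Finset.mem_univ _, ?_⟩, ?_⟩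
    · show Multiset.card (i ::ₘ mu.parts) = k
      rw [Multiset.card_cons, hcard]
      omega
    · exact Multiset.mem_toFinset.2 (Multiset.mem_cons_self _ _)
  · rintro ⟨lam, n⟩ ha
    obtain ⟨h1, h2⟩ := Finset.mem_sigma.1 ha
    have hn : n ∈ lam.parts := Multiset.mem_toFinset.1 h2
    exact Sigma.ext (Nat.Partition.ext (Multiset.cons_erase hn)) HEq.rfl
  · rintro ⟨i, mu⟩ ha
    exact Sigma.ext rfl (heq_of_eq (Nat.Partition.ext (Multiset.erase_cons_head _ _)))
  · intro a ha
    rfl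

lemma partWeight_zero_zero : partWeight 0 0 = 1 := by
  have huniq : ∀ lam : Nat.Partition 0, lam.parts = 0 := by
    intro lam
    have hs := lam.parts_sum
    by_contra h
    obtain ⟨x, hx⟩ := Multiset.exists_mem_of_ne_zero h
    have h1 := lam.parts_pos hx
    have h2 := Multiset.le_sum_of_mem hx
    omega
  rw [partWeight]
  have hfilter : (Finset.univ.filter (fun lam : Nat.Partition 0 => lam.parts.card = 0))
      = Finset.univ := by
    refine Finset.filter_true_of_mem fun lam _ => ?_
    rw [huniq lam]
    rfl
  rw [hfilter]
  have hcard : Fintype.card (Nat.Partition 0) = 1 := by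
    refine Fintype.card_eq_one_iff.2 ⟨⟨0, by simp, rfl⟩, fun lam => ?_⟩
    exact Nat.Partition.ext (huniq lam)
  simp [hcard]

open Polynomial in
noncomputable def Pp (m : ℕ) : Polynomial ℚ :=
  ∑ k ∈ Finset.range (m + 1), C (partWeight m k) * X ^ k

open Polynomial in
noncomputable def Qq (m : ℕ) : Polynomial ℚ :=
  C ((Nat.factorial m : ℚ)⁻¹) * ∏ j ∈ Finset.range m, (X + C (j : ℚ))

lemma sum_shift {M : Type*} [AddCommMonoid M] (g : ℕ → M) (m : ℕ) :
    ∑ i ∈ Finset.Icc 1 m, g (m - i) = ∑ j ∈ Finset.range m, g j := by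
  refine Finset.sum_nbij' (i := fun i => m - i) (j := fun j => m - j)
    ?_ ?_ ?_ ?_ ?_ <;> intro a ha <;>
    simp only [Finset.mem_Icc, Finset.mem_range] at * <;> first | omega | (congr 1; omega)

open Polynomial in
lemma Pp_rec (m : ℕ) : (m : ℚ) • Pp m = X * ∑ j ∈ Finset.range m, Pp j := by
  rcases Nat.eq_zero_or_pos m with rfl | hm
  · simp
  have hPj : ∀ j ∈ Finset.range m, Pp j =
      ∑ k ∈ Finset.range m, C (partWeight j k) * X ^ k := by
    intro j hj
    rw [Finset.mem_range] at hj
    rw [Pp]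
    refine Finset.sum_subset (fun x hx => ?_) (fun x hx hx' => ?_)
    · rw [Finset.mem_range] at *; omega
    · rw [Finset.mem_range] at hx hx'
      rw [partWeight_eq_zero_of_lt (by omega), map_zero, zero_mul]
  rw [Finset.sum_congr rfl hPj, Finset.sum_comm, Finset.mul_sum]
  rw [Pp, Finset.smul_sum, Finset.sum_range_succ']
  have h0 : (m : ℚ) • (C (partWeight m 0) * X ^ 0) = 0 := by
    rw [partWeight_zero_right hm]; simp
  rw [h0, add_zero]
  refine Finset.sum_congr rfl fun k hk => ?_
  rw [smul_eq_C_mul, ← mul_assoc, ← C_mul, partWeight_rec (by omega)]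
  have : (k + 1) - 1 = k := rfl
  rw [this, sum_shift (fun j => partWeight j k) m, ← Finset.sum_mul, map_sum]
  rw [pow_succ]
  ring

open Polynomial in
lemma Qq_succ (m : ℕ) : ((m : ℚ) + 1) • Qq (m + 1) = (X + C (m : ℚ)) * Qq m := by
  have h : ((m : ℚ) + 1) * ((Nat.factorial (m + 1) : ℚ))⁻¹ = ((Nat.factorial m : ℚ))⁻¹ := by
    rw [Nat.factorial_succ]
    push_cast
    rw [mul_inv]
    rw [← mul_assoc, mul_inv_cancel₀ (by positivity), one_mul]
  rw [Qq, Qq, Finset.prod_range_succ, smul_eq_C_mul, ← mul_assoc, ← C_mul, h]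
  ring

open Polynomial in
lemma Qq_rec (m : ℕ) : (m : ℚ) • Qq m = X * ∑ j ∈ Finset.range m, Qq j := by
  induction m with
  | zero => simp
  | succ n ih =>
    push_cast
    rw [Qq_succ, add_mul, ← smul_eq_C_mul, ih, Finset.sum_range_succ, mul_add]
    ring

lemma Pp_eq_Qq : ∀ m, Pp m = Qq m := by
  intro m
  induction m using Nat.strong_induction_on with
  | _ m ih =>
    rcases Nat.eq_zero_or_pos m with rfl | hm
    · rw [Pp, Qq]
      simp [partWeight_zero_zero]
    have key : (m : ℚ) • Pp m = (m : ℚ) • Qq m := by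
      rw [Pp_rec, Qq_rec]
      congr 1
      exact Finset.sum_congr rfl fun j hj => ih j (Finset.mem_range.1 hj)
    exact smul_right_injective (Polynomial ℚ) (by exact_mod_cast hm.ne') key

/-- The formal power series identity
`∑_{m,k} f(m,k) x^m y^k = (1-x)^{-y} = ∑_m (∏_{j=0}^{m-1}(y+j)/m!) x^m`,
as an identity of formal power series in `x` with coefficients in `ℚ[y]`. -/
theorem partWeight_powerSeries_identity :
    (PowerSeries.mk fun m =>
        ∑ k ∈ Finset.range (m + 1), Polynomial.C (partWeight m k) * Polynomial.X ^ k) =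
      (PowerSeries.mk fun m =>
        Polynomial.C ((Nat.factorial m : ℚ)⁻¹) *
          ∏ j ∈ Finset.range m, (Polynomial.X + Polynomial.C (j : ℚ))) := by
  apply PowerSeries.ext
  intro n
  rw [PowerSeries.coeff_mk, PowerSeries.coeff_mk]
  exact Pp_eq_Qq n
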